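/- Approximate recovery of almost-pure mixed states. Let L, P, P' be finite types, let E : L → P, N : P → P' and D : P' → L be quantum channels, and let 0 ≤ ε ≤ 1. Suppose that for every unit vector ψ on L, (star ψ ⬝ᵥ (D (N (E (Matrix.vecMulVec ψ (star ψ))))).mulVec ψ).re ≥ 1 − ε. Then for every state ρ on L, Fid(D (N (E ρ)), ρ) ≥ ((ρ * ρ).trace).re · (1 − ε), where Fid is the Uhlmann fidelity Fid(ρ, σ) := (((√(√ρ * σ * √ρ)).trace).re)² defined via positive-semidefinite matrix square roots. -/

import Mathlib

open scoped Kronecker ComplexOrder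
open Matrix MeasureTheory

noncomputable section

/-- Choi matrix of a linear map on matrices. -/
def choiMatrix {A B : Type*} [Fintype A] [DecidableEq A] [Fintype B]
    (E : Matrix A A ℂ →ₗ[ℂ] Matrix B B ℂ) : Matrix (A × B) (A × B) ℂ :=
  ∑ i, ∑ j, (Matrix.single i j (1 : ℂ)) ⊗ₖ E (Matrix.single i j 1)

/-- A linear map is a quantum channel if it is trace-preserving and its Choi matrix is PSD. -/
def IsQuantumChannel {A B : Type*} [Fintype A] [DecidableEq A] [Fintype B]
    (E : Matrix A A ℂ →ₗ[ℂ] Matrix B B ℂ) : Prop :=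
  (∀ X, (E X).trace = X.trace) ∧ (choiMatrix E).PosSemidef

/-- A state: positive semidefinite with unit trace. -/
def IsState {S : Type*} [Fintype S] (ρ : Matrix S S ℂ) : Prop := ρ.PosSemidef ∧ ρ.trace = 1

/-- A unit vector. -/
def IsUnitVector {S : Type*} [Fintype S] (ψ : S → ℂ) : Prop := ∑ s, ‖ψ s‖ ^ 2 = 1

/-- The pure state (rank-one projector) of a vector. -/
def pureState {S : Type*} (ψ : S → ℂ) : Matrix S S ℂ := Matrix.vecMulVec ψ (star ψ)

/-- Square root of a positive semidefinite matrix (junk value `0` if not PSD). -/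
def psdSqrt {S : Type*} [Fintype S] [DecidableEq S] (M : Matrix S S ℂ) : Matrix S S ℂ :=
  open Classical in
  if h : M.PosSemidef then
    (h.1.eigenvectorUnitary : Matrix S S ℂ) * diagonal ((↑) ∘ Real.sqrt ∘ h.1.eigenvalues) *
      (star (h.1.eigenvectorUnitary : Matrix S S ℂ)) else 0

/-- Uhlmann fidelity `Fid(ρ, σ) = (tr √(√ρ σ √ρ))²`. -/
def Fid {S : Type*} [Fintype S] [DecidableEq S] (ρ σ : Matrix S S ℂ) : ℝ :=
  (((psdSqrt (psdSqrt ρ * σ * psdSqrt ρ)).trace).re) ^ 2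

/-! ### Auxiliary lemmas -/

lemma rc_coe (r : ℝ) : (RCLike.ofReal r : ℂ) = (r : ℂ) := rfl

lemma choi_apply {A B : Type*} [Fintype A] [DecidableEq A] [Fintype B]
    (E : Matrix A A ℂ →ₗ[ℂ] Matrix B B ℂ) (a c : A) (b d : B) :
    choiMatrix E (a, b) (c, d) = E (single a c 1) b d := by
  classical
  simp [choiMatrix, Matrix.sum_apply, Matrix.kroneckerMap_apply, Matrix.single,
    Matrix.of_apply, ite_and, Finset.sum_ite_eq, Finset.sum_ite_eq']

lemma posSemidef_sum {n ι : Type*} [Fintype n] (s : Finset ι) (f : ι → Matrix n n ℂ)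
    (h : ∀ i ∈ s, (f i).PosSemidef) : (∑ i ∈ s, f i).PosSemidef := by
  classical
  induction s using Finset.cons_induction with
  | empty => simpa using Matrix.PosSemidef.zero
  | cons i s hi ih =>
      rw [Finset.sum_cons]
      exact (h i (Finset.mem_cons_self _ _)).add (ih fun j hj => h j (Finset.mem_cons_of_mem hj))

lemma map_apply_eq {A B : Type*} [Fintype A] [DecidableEq A] [Fintype B]
    (E : Matrix A A ℂ →ₗ[ℂ] Matrix B B ℂ) (X : Matrix A A ℂ) (b d : B) :
    E X b d = ∑ a, ∑ c, X a c * E (single a c 1) b d := by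
  conv_lhs => rw [matrix_eq_sum_single X]
  rw [map_sum]
  simp only [Matrix.sum_apply]
  refine Finset.sum_congr rfl fun a _ => ?_
  rw [map_sum]
  simp only [Matrix.sum_apply]
  refine Finset.sum_congr rfl fun c _ => ?_
  have : single a c (X a c) = X a c • single a c (1 : ℂ) := by
    rw [smul_single, smul_eq_mul, mul_one]
  rw [this, LinearMap.map_smul]
  simp

/-- A linear map with positive semidefinite Choi matrix is a positive map. -/
lemma posMap {A B : Type*} [Fintype A] [DecidableEq A] [Fintype B] [DecidableEq B]
    (E : Matrix A A ℂ →ₗ[ℂ] Matrix B B ℂ) (hC : (choiMatrix E).PosSemidef)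
    {X : Matrix A A ℂ} (hX : X.PosSemidef) : (E X).PosSemidef := by
  obtain ⟨M, hM⟩ : ∃ M : Matrix (A × B) (A × B) ℂ, choiMatrix E = Mᴴ * M := by
    open scoped MatrixOrder in
    obtain ⟨B', hB'⟩ := CStarAlgebra.nonneg_iff_eq_star_mul_self.mp hC.nonneg
    exact ⟨B', hB'⟩
  set K : (A × B) → Matrix B A ℂ := fun k => Matrix.of (fun b a => star (M k (a, b))) with hK
  have key : E X = ∑ k, K k * X * (K k)ᴴ := by
    ext b d
    have hc : ∀ a c, E (single a c 1) b d = ∑ k, star (M k (a, b)) * M k (c, d) := by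
      intro a c
      rw [← choi_apply, hM]
      simp [Matrix.mul_apply, Matrix.conjTranspose_apply]
    rw [map_apply_eq]
    simp only [hc]
    simp only [Matrix.sum_apply, Finset.mul_sum]
    calc ∑ a : A, ∑ c : A, ∑ k : A × B, X a c * (star (M k (a, b)) * M k (c, d))
        = ∑ a : A, ∑ k : A × B, ∑ c : A, X a c * (star (M k (a, b)) * M k (c, d)) :=
          Finset.sum_congr rfl fun a _ => Finset.sum_comm
      _ = ∑ k : A × B, ∑ a : A, ∑ c : A, X a c * (star (M k (a, b)) * M k (c, d)) :=
          Finset.sum_comm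
      _ = ∑ k : A × B, (K k * X * (K k)ᴴ) b d := by
          refine Finset.sum_congr rfl fun k _ => ?_
          simp only [Matrix.mul_apply, Matrix.conjTranspose_apply, hK, Matrix.of_apply,
            Finset.sum_mul, Finset.mul_sum, star_star]
          rw [Finset.sum_comm]
          exact Finset.sum_congr rfl fun a _ => Finset.sum_congr rfl fun c _ => by ring
  rw [key]
  exact posSemidef_sum _ _ fun k _ => hX.mul_mul_conjTranspose_same (K k)

lemma conj_unitary_trace {S : Type*} [Fintype S] [DecidableEq S]
    (U M : Matrix S S ℂ) (hU : star U * U = 1) :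
    (U * M * star U).trace = M.trace := by
  rw [Matrix.trace_mul_cycle, hU, Matrix.one_mul]

lemma conj_unitary_sq {S : Type*} [Fintype S] [DecidableEq S]
    (U M : Matrix S S ℂ) (hU : star U * U = 1) :
    (U * M * star U) * (U * M * star U) = U * (M * M) * star U := by
  simp only [Matrix.mul_assoc]
  rw [show star U * (U * (M * star U)) = M * star U by
    rw [← Matrix.mul_assoc, hU, Matrix.one_mul]]

lemma trace_eq_sum_eig {S : Type*} [Fintype S] [DecidableEq S] {A : Matrix S S ℂ}
    (hA : A.IsHermitian) : A.trace = ∑ i, (hA.eigenvalues i : ℂ) := by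
  conv_lhs => rw [hA.spectral_theorem, Unitary.conjStarAlgAut_apply]
  rw [conj_unitary_trace _ _ (Matrix.mem_unitaryGroup_iff'.mp (hA.eigenvectorUnitary).2)]
  simp [Matrix.trace_diagonal]

lemma trace_sq_eq_sum_eig {S : Type*} [Fintype S] [DecidableEq S] {A : Matrix S S ℂ}
    (hA : A.IsHermitian) : (A * A).trace = ∑ i, (hA.eigenvalues i : ℂ) ^ 2 := by
  have hU := Matrix.mem_unitaryGroup_iff'.mp (hA.eigenvectorUnitary).2
  conv_lhs => rw [hA.spectral_theorem, Unitary.conjStarAlgAut_apply]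
  rw [conj_unitary_sq _ _ hU, conj_unitary_trace _ _ hU, Matrix.diagonal_mul_diagonal]
  simp [Matrix.trace_diagonal, sq]

lemma psd_facts {S : Type*} [Fintype S] [DecidableEq S] {M : Matrix S S ℂ}
    (h : M.PosSemidef) : (psdSqrt M).PosSemidef ∧ psdSqrt M * psdSqrt M = M := by
  rw [psdSqrt, dif_pos h]
  have hU : star (h.1.eigenvectorUnitary : Matrix S S ℂ) * (h.1.eigenvectorUnitary : Matrix S S ℂ)
      = 1 := Matrix.mem_unitaryGroup_iff'.mp h.1.eigenvectorUnitary.2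
  constructor
  · rw [Matrix.star_eq_conjTranspose]
    refine Matrix.PosSemidef.mul_mul_conjTranspose_same (Matrix.PosSemidef.diagonal ?_) _
    intro i
    simp only [Pi.zero_apply, Function.comp_apply]
    exact Complex.zero_le_real.mpr (Real.sqrt_nonneg _)
  · rw [conj_unitary_sq _ _ hU, diagonal_mul_diagonal]
    have hd : (fun i => ((↑) ∘ Real.sqrt ∘ h.1.eigenvalues : S → ℂ) i *
        ((↑) ∘ Real.sqrt ∘ h.1.eigenvalues : S → ℂ) i) = (RCLike.ofReal ∘ h.1.eigenvalues : S → ℂ) := by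
      funext i
      simp only [Function.comp_apply, rc_coe, ← Complex.ofReal_mul,
        Real.mul_self_sqrt (h.eigenvalues_nonneg i)]
    rw [hd]
    conv_rhs => rw [h.1.spectral_theorem, Unitary.conjStarAlgAut_apply]

/-- The fidelity dominates the overlap `tr(ρσ)`. -/
lemma fid_ge_trace {S : Type*} [Fintype S] [DecidableEq S] {σ ρ : Matrix S S ℂ}
    (hσ : σ.PosSemidef) (hρ : ρ.PosSemidef) : Fid σ ρ ≥ ((ρ * σ).trace).re := by
  rw [Fid]
  have hsq : psdSqrt σ * ρ * psdSqrt σ = psdSqrt σ * ρ * (psdSqrt σ)ᴴ := by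
    rw [(psd_facts hσ).1.1]
  have hM : (psdSqrt σ * ρ * psdSqrt σ).PosSemidef := by
    rw [hsq]; exact hρ.mul_mul_conjTranspose_same _
  have htr : (psdSqrt σ * ρ * psdSqrt σ).trace = (ρ * σ).trace := by
    rw [Matrix.trace_mul_cycle, (psd_facts hσ).2, Matrix.trace_mul_comm]
  set N := psdSqrt (psdSqrt σ * ρ * psdSqrt σ) with hN
  have hNps : N.PosSemidef := (psd_facts hM).1
  have hNN : N * N = psdSqrt σ * ρ * psdSqrt σ := (psd_facts hM).2
  rw [← htr]
  set l := hNps.1.eigenvalues with hl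
  have h1 : N.trace = ∑ i, (l i : ℂ) := trace_eq_sum_eig hNps.1
  have h2 : (psdSqrt σ * ρ * psdSqrt σ).trace = ∑ i, (l i : ℂ) ^ 2 := by
    rw [← hNN]; exact trace_sq_eq_sum_eig hNps.1
  have hlnn : ∀ i, 0 ≤ l i := hNps.eigenvalues_nonneg
  rw [h1, h2]
  have e1 : (∑ i, (l i : ℂ)).re = ∑ i, l i := by
    rw [← Complex.ofReal_sum]; simp
  have e2 : (∑ i, (l i : ℂ) ^ 2).re = ∑ i, (l i) ^ 2 := by
    rw [show (∑ i, ((l i : ℂ)) ^ 2) = ((∑ i, (l i) ^ 2 : ℝ) : ℂ) by push_cast; ring,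
      Complex.ofReal_re]
  rw [e1, e2]
  have : ∑ i, l i ^ 2 ≤ (∑ i, l i) ^ 2 := by
    rw [sq]
    refine le_trans (Finset.sum_le_sum fun i _ => ?_) (le_of_eq (Finset.sum_mul _ _ _).symm)
    calc l i ^ 2 = l i * l i := pow_two _
      _ ≤ l i * ∑ j, l j := by
          refine mul_le_mul_of_nonneg_left ?_ (hlnn i)
          exact Finset.single_le_sum (fun j _ => hlnn j) (Finset.mem_univ i)
  linarith

lemma pureState_posSemidef {S : Type*} [Fintype S] (ψ : S → ℂ) :
    (pureState ψ).PosSemidef := by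
  refine Matrix.PosSemidef.of_dotProduct_mulVec_nonneg ?_ ?_
  · ext i j
    simp [pureState, Matrix.vecMulVec_apply, Matrix.conjTranspose_apply, mul_comm]
  · intro x
    have key : star x ⬝ᵥ (pureState ψ).mulVec x
        = star (star ψ ⬝ᵥ x) * (star ψ ⬝ᵥ x) := by
      simp only [pureState, dotProduct, Matrix.mulVec, Matrix.vecMulVec_apply,
        Pi.star_apply, star_sum, star_mul', star_star, Finset.sum_mul, Finset.mul_sum]
      rw [Finset.sum_comm]
      exact Finset.sum_congr rfl fun i _ => Finset.sum_congr rfl fun j _ => by ring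
    rw [key]
    exact star_mul_self_nonneg _

lemma trace_pureState_mul {S : Type*} [Fintype S] (ψ : S → ℂ) (A : Matrix S S ℂ) :
    (pureState ψ * A).trace = star ψ ⬝ᵥ A.mulVec ψ := by
  simp only [Matrix.trace, Matrix.diag_apply, Matrix.mul_apply, pureState,
    Matrix.vecMulVec_apply, Pi.star_apply, dotProduct, Matrix.mulVec, Finset.mul_sum]
  rw [Finset.sum_comm]
  exact Finset.sum_congr rfl fun i _ => Finset.sum_congr rfl fun j _ => by ring

lemma spectral_sum {S : Type*} [Fintype S] [DecidableEq S] {ρ : Matrix S S ℂ}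
    (hρ : ρ.IsHermitian) :
    ρ = ∑ i, (hρ.eigenvalues i : ℂ) •
      pureState (fun a => (hρ.eigenvectorUnitary : Matrix S S ℂ) a i) := by
  conv_lhs => rw [hρ.spectral_theorem, Unitary.conjStarAlgAut_apply]
  ext a b
  simp only [Matrix.mul_apply, Matrix.sum_apply, Matrix.smul_apply, pureState,
    Matrix.vecMulVec_apply, Pi.star_apply, Matrix.diagonal_apply, Function.comp_apply,
    smul_eq_mul, Matrix.star_apply, mul_ite, ite_mul, mul_zero, zero_mul,
    Finset.sum_ite_eq, Finset.sum_ite_eq', Finset.mem_univ, if_true]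
  exact Finset.sum_congr rfl fun i _ => by rw [rc_coe]; ring

lemma unit_col {S : Type*} [Fintype S] [DecidableEq S] {ρ : Matrix S S ℂ}
    (hρ : ρ.IsHermitian) (i : S) :
    IsUnitVector (fun a => (hρ.eigenvectorUnitary : Matrix S S ℂ) a i) := by
  set U : Matrix S S ℂ := (hρ.eigenvectorUnitary : Matrix S S ℂ) with hUdef
  have hU : star U * U = 1 := Matrix.mem_unitaryGroup_iff'.mp (hρ.eigenvectorUnitary).2
  have h1 : (star U * U) i i = (1 : Matrix S S ℂ) i i := by rw [hU]
  rw [Matrix.mul_apply] at h1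
  simp only [Matrix.one_apply_eq, Matrix.star_apply] at h1
  have h2 : ((∑ a, ‖U a i‖ ^ 2 : ℝ) : ℂ) = 1 := by
    push_cast
    rw [← h1]
    refine Finset.sum_congr rfl fun a _ => ?_
    rw [mul_comm, Complex.star_def, Complex.mul_conj, Complex.normSq_eq_norm_sq]
    push_cast; ring
  exact Complex.ofReal_eq_one.mp h2

/-- **Approximate recovery of almost-pure mixed states.**
If decoding recovers every pure logical state with fidelity at least `1 - ε`, then every
mixed state `ρ` is recovered with Uhlmann fidelity at least `tr(ρ²)(1 - ε)`. -/
theorem approximate_recovery_mixed_states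
    {L P P' : Type*} [Fintype L] [DecidableEq L] [Fintype P] [DecidableEq P]
    [Fintype P'] [DecidableEq P']
    (E : Matrix L L ℂ →ₗ[ℂ] Matrix P P ℂ) (hE : IsQuantumChannel E)
    (N : Matrix P P ℂ →ₗ[ℂ] Matrix P' P' ℂ) (hN : IsQuantumChannel N)
    (D : Matrix P' P' ℂ →ₗ[ℂ] Matrix L L ℂ) (hD : IsQuantumChannel D)
    (ε : ℝ) (hε0 : 0 ≤ ε) (hε1 : ε ≤ 1)
    (h : ∀ ψ : L → ℂ, IsUnitVector ψ →
      (star ψ ⬝ᵥ (D (N (E (pureState ψ)))).mulVec ψ).re ≥ 1 - ε)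
    (ρ : Matrix L L ℂ) (hρ : IsState ρ) :
    Fid (D (N (E ρ))) ρ ≥ ((ρ * ρ).trace).re * (1 - ε) := by
  classical
  have hFFpos : ∀ {X : Matrix L L ℂ}, X.PosSemidef → (D (N (E X))).PosSemidef :=
    fun hX => posMap D hD.2 (posMap N hN.2 (posMap E hE.2 hX))
  have hσ : (D (N (E ρ))).PosSemidef := hFFpos hρ.1
  have step1 : Fid (D (N (E ρ))) ρ ≥ ((ρ * D (N (E ρ))).trace).re := fid_ge_trace hσ hρ.1
  have hH : ρ.IsHermitian := hρ.1.1
  set p : L → ℝ := hH.eigenvalues with hp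
  set ψ : L → L → ℂ := fun i a => (hH.eigenvectorUnitary : Matrix L L ℂ) a i with hψ
  have hpnn : ∀ i, 0 ≤ p i := hρ.1.eigenvalues_nonneg
  have hdecomp : ρ = ∑ i, (p i : ℂ) • pureState (ψ i) := spectral_sum hH
  have hσdecomp : D (N (E ρ)) = ∑ j, (p j : ℂ) • D (N (E (pureState (ψ j)))) := by
    conv_lhs => rw [hdecomp]
    rw [map_sum, map_sum, map_sum]
    simp only [LinearMap.map_smul]
  have hτ0 : ∀ i j, 0 ≤ (star (ψ i) ⬝ᵥ (D (N (E (pureState (ψ j))))).mulVec (ψ i)).re :=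
    fun i j => (hFFpos (pureState_posSemidef (ψ j))).re_dotProduct_nonneg (ψ i)
  have hτd : ∀ i, 1 - ε ≤ (star (ψ i) ⬝ᵥ (D (N (E (pureState (ψ i))))).mulVec (ψ i)).re :=
    fun i => h (ψ i) (unit_col hH i)
  have htrace : ((ρ * D (N (E ρ))).trace).re
      = ∑ i, ∑ j, p i * (p j *
        (star (ψ i) ⬝ᵥ (D (N (E (pureState (ψ j))))).mulVec (ψ i)).re) := by
    conv_lhs => rw [hσdecomp, hdecomp]
    simp only [Finset.sum_mul, Finset.mul_sum, Matrix.smul_mul, Matrix.mul_smul,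
      smul_smul, Matrix.trace_sum, Matrix.trace_smul, trace_pureState_mul, smul_eq_mul,
      Complex.re_sum]
    rw [Finset.sum_comm]
    refine Finset.sum_congr rfl fun i _ => Finset.sum_congr rfl fun j _ => ?_
    rw [show ((p j : ℂ) * (p i : ℂ)) = ((p i * p j : ℝ) : ℂ) by push_cast; ring,
      Complex.re_ofReal_mul]
    ring
  have hρ2 : ((ρ * ρ).trace).re = ∑ i, p i ^ 2 := by
    rw [trace_sq_eq_sum_eig hH]
    rw [show (∑ i, ((p i : ℂ)) ^ 2) = ((∑ i, p i ^ 2 : ℝ) : ℂ) by push_cast; ring,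
      Complex.ofReal_re]
  have key : (∑ i, p i ^ 2) * (1 - ε)
      ≤ ∑ i, ∑ j, p i * (p j *
        (star (ψ i) ⬝ᵥ (D (N (E (pureState (ψ j))))).mulVec (ψ i)).re) := by
    calc (∑ i, p i ^ 2) * (1 - ε) = ∑ i, p i * (p i * (1 - ε)) := by
          rw [Finset.sum_mul]
          exact Finset.sum_congr rfl fun i _ => by ring
      _ ≤ ∑ i, p i * (p i *
            (star (ψ i) ⬝ᵥ (D (N (E (pureState (ψ i))))).mulVec (ψ i)).re) :=
          Finset.sum_le_sum fun i _ => mul_le_mul_of_nonneg_left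
            (mul_le_mul_of_nonneg_left (hτd i) (hpnn i)) (hpnn i)
      _ ≤ ∑ i, ∑ j, p i * (p j *
            (star (ψ i) ⬝ᵥ (D (N (E (pureState (ψ j))))).mulVec (ψ i)).re) :=
          Finset.sum_le_sum fun i _ => Finset.single_le_sum
            (fun j _ => mul_nonneg (hpnn i) (mul_nonneg (hpnn j) (hτ0 i j)))
            (Finset.mem_univ i)
  rw [hρ2]
  linarith [step1, htrace ▸ key]

end
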